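/- Let ζ : ℝ^d → ℝ be twice continuously differentiable and suppose there are 0 < λ ≤ Λ with λ·I ≤ D²ζ(x) ≤ Λ·I for all x ∈ ℝ^d. Fix x ∈ ℝ^d and suppose y : (0,1) → ℝ^d is continuous and satisfies (1 − t)·y(t) + t·∇ζ(y(t)) = x for every t ∈ (0,1). Then y is differentiable on (0,1) and y'(t) = −( (1−t)·I + t·D²ζ(y(t)) )^{−1} ( ∇ζ(y(t)) − y(t) ) for every t ∈ (0,1). -/

import Mathlib

open Matrix Topology Filter

/-- The Hessian matrix of second partial derivatives of a function on Euclidean space. -/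
noncomputable def hessE {d : ℕ} (f : EuclideanSpace ℝ (Fin d) → ℝ)
    (x : EuclideanSpace ℝ (Fin d)) : Matrix (Fin d) (Fin d) ℝ :=
  Matrix.of fun i j =>
    fderiv ℝ (fun y => fderiv ℝ f y (EuclideanSpace.single j 1)) x (EuclideanSpace.single i 1)

section aux
variable {d : ℕ} {ζ : EuclideanSpace ℝ (Fin d) → ℝ}

local notation "E" => EuclideanSpace ℝ (Fin d)

lemma grad_contDiff (hζ : ContDiff ℝ 2 ζ) : ContDiff ℝ 1 (gradient ζ) := by
  have h1 : ContDiff ℝ 1 (fun z => fderiv ℝ ζ z) := hζ.fderiv_right (by norm_num)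
  exact ((InnerProductSpace.toDual ℝ E).symm.toLinearIsometry.toContinuousLinearMap.contDiff).comp h1

lemma grad_coord (z : E) (i : Fin d) :
    gradient ζ z i = fderiv ℝ ζ z (EuclideanSpace.single i 1) := by
  have h : inner ℝ (gradient ζ z) (EuclideanSpace.single i (1:ℝ)) = fderiv ℝ ζ z (EuclideanSpace.single i 1) :=
    InnerProductSpace.toDual_symm_apply
  rw [← h, EuclideanSpace.inner_single_right]
  simp

end aux
section aux2
variable {d : ℕ} {ζ : EuclideanSpace ℝ (Fin d) → ℝ}
local notation "E" => EuclideanSpace ℝ (Fin d)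
local notation "e" i => EuclideanSpace.single i (1:ℝ)

lemma hessE_eq_snd (hζ : ContDiff ℝ 2 ζ) (z : E) (i j : Fin d) :
    hessE ζ z i j = fderiv ℝ (fderiv ℝ ζ) z (e i) (e j) := by
  have hdiff : DifferentiableAt ℝ (fderiv ℝ ζ) z :=
    ((hζ.fderiv_right (m := 1) (by norm_num)).differentiable one_ne_zero) z
  have h2 := ((ContinuousLinearMap.apply ℝ ℝ (e j) : (E →L[ℝ] ℝ) →L[ℝ] ℝ).hasFDerivAt.comp z hdiff.hasFDerivAt).fderiv
  have : (fun y => fderiv ℝ ζ y (e j)) =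
      (ContinuousLinearMap.apply ℝ ℝ (e j) : (E →L[ℝ] ℝ) →L[ℝ] ℝ) ∘ (fderiv ℝ ζ) := rfl
  rw [hessE]
  simp only [Matrix.of_apply]
  rw [this, h2]
  rfl

lemma hessE_symm (hζ : ContDiff ℝ 2 ζ) (z : E) (i j : Fin d) :
    hessE ζ z i j = hessE ζ z j i := by
  rw [hessE_eq_snd hζ, hessE_eq_snd hζ]
  exact (hζ.contDiffAt.isSymmSndFDerivAt (by norm_num)).eq _ _

end aux2
section aux3
variable {d : ℕ} {ζ : EuclideanSpace ℝ (Fin d) → ℝ}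
local notation "E" => EuclideanSpace ℝ (Fin d)
local notation "e" i => EuclideanSpace.single i (1:ℝ)

lemma eucl_decomp (u : E) : u = ∑ j : Fin d, u j • (e j) := by
  ext k
  have : (∑ j : Fin d, u j • (e j)) k = ∑ j : Fin d, (u j • (e j)) k := by rw [WithLp.ofLp_sum]; exact Finset.sum_apply k _ _
  rw [this]
  simp [EuclideanSpace.single_apply]

lemma fderiv_grad_coord (hζ : ContDiff ℝ 2 ζ) (z : E) (u : E) (i : Fin d) :
    fderiv ℝ (gradient ζ) z u i = (hessE ζ z *ᵥ u) i := by
  have hgdiff : DifferentiableAt ℝ (gradient ζ) z :=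
    ((grad_contDiff hζ).differentiable one_ne_zero) z
  have hdiff : DifferentiableAt ℝ (fderiv ℝ ζ) z :=
    ((hζ.fderiv_right (m := 1) (by norm_num)).differentiable one_ne_zero) z
  -- coordinate i of the image as fderiv of coordinate function
  have h1 : fderiv ℝ (gradient ζ) z u i
      = fderiv ℝ ((EuclideanSpace.proj i : E →L[ℝ] ℝ) ∘ gradient ζ) z u := by
    rw [((EuclideanSpace.proj i : E →L[ℝ] ℝ).hasFDerivAt.comp z hgdiff.hasFDerivAt).fderiv]
    rfl
  have h2 : ((EuclideanSpace.proj i : E →L[ℝ] ℝ) ∘ gradient ζ)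
      = (ContinuousLinearMap.apply ℝ ℝ (e i) : (E →L[ℝ] ℝ) →L[ℝ] ℝ) ∘ (fderiv ℝ ζ) := by
    funext w
    exact grad_coord w i
  have h3 : fderiv ℝ ((ContinuousLinearMap.apply ℝ ℝ (e i) : (E →L[ℝ] ℝ) →L[ℝ] ℝ) ∘ (fderiv ℝ ζ)) z u
      = fderiv ℝ (fderiv ℝ ζ) z u (e i) := by
    rw [((ContinuousLinearMap.apply ℝ ℝ (e i) : (E →L[ℝ] ℝ) →L[ℝ] ℝ).hasFDerivAt.comp z hdiff.hasFDerivAt).fderiv]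
    rfl
  rw [h1, h2, h3]
  conv_lhs => rw [eucl_decomp u]
  rw [map_sum, Matrix.mulVec, dotProduct]
  rw [ContinuousLinearMap.sum_apply]
  congr 1
  funext j
  rw [_root_.map_smul]
  have : fderiv ℝ (fderiv ℝ ζ) z (e j) (e i) = hessE ζ z j i := (hessE_eq_snd hζ z j i).symm
  simp only [ContinuousLinearMap.smul_apply, this, smul_eq_mul]
  rw [hessE_symm hζ z j i, mul_comm]

end aux3
section aux4
variable {d : ℕ} {ζ : EuclideanSpace ℝ (Fin d) → ℝ} {lam : ℝ}
local notation "E" => EuclideanSpace ℝ (Fin d)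

lemma dot_self_norm (u : E) : (u : Fin d → ℝ) ⬝ᵥ u = ‖u‖^2 := by
  rw [← real_inner_self_eq_norm_sq]
  rw [PiLp.inner_apply]
  simp [dotProduct, sq]

lemma quad_lower (hζ : ContDiff ℝ 2 ζ)
    (hlower : ∀ x, (hessE ζ x - lam • (1 : Matrix (Fin d) (Fin d) ℝ)).PosSemidef)
    (z u : E) : lam * ‖u‖^2 ≤ inner ℝ (fderiv ℝ (gradient ζ) z u) u := by
  have h0 := (hlower z).dotProduct_mulVec_nonneg u
  rw [star_trivial, Matrix.sub_mulVec, dotProduct_sub] at h0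
  have h1 : (lam • (1 : Matrix (Fin d) (Fin d) ℝ)) *ᵥ (u : Fin d → ℝ) = lam • (u : Fin d → ℝ) := by
    rw [Matrix.smul_mulVec, Matrix.one_mulVec]
  rw [h1, dotProduct_smul, smul_eq_mul, dot_self_norm, sub_nonneg] at h0
  have h2 : (inner ℝ (fderiv ℝ (gradient ζ) z u) u : ℝ) = (u : Fin d → ℝ) ⬝ᵥ (hessE ζ z *ᵥ u) := by
    rw [PiLp.inner_apply, dotProduct_comm, dotProduct]
    congr 1
    funext i
    rw [fderiv_grad_coord hζ z u i]
    simp [mul_comm]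
  rw [h2]
  exact h0

end aux4
section aux5
variable {d : ℕ} {ζ : EuclideanSpace ℝ (Fin d) → ℝ} {lam : ℝ}
local notation "E" => EuclideanSpace ℝ (Fin d)

lemma grad_mono (hζ : ContDiff ℝ 2 ζ)
    (hlower : ∀ x, (hessE ζ x - lam • (1 : Matrix (Fin d) (Fin d) ℝ)).PosSemidef)
    (z w : E) : lam * ‖z - w‖^2 ≤ inner ℝ (gradient ζ z - gradient ζ w) (z - w) := by
  set u : E := z - w with hu
  set c : ℝ → E := fun s => w + s • u with hc
  have hgd : Differentiable ℝ (gradient ζ) := (grad_contDiff hζ).differentiable one_ne_zero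
  set φ : ℝ → ℝ := fun s => inner ℝ u (gradient ζ (c s)) - s * (lam * ‖u‖^2) with hφ
  have hder : ∀ s : ℝ, HasDerivAt φ
      ((inner ℝ u (fderiv ℝ (gradient ζ) (c s) u) : ℝ) - lam * ‖u‖^2) s := by
    intro s
    have hc' : HasDerivAt c u s := by
      have h := ((hasDerivAt_id s).smul_const u).const_add w; rwa [one_smul] at h
    have hgc : HasDerivAt (fun s => gradient ζ (c s)) (fderiv ℝ (gradient ζ) (c s) u) s :=
      (hgd (c s)).hasFDerivAt.comp_hasDerivAt s hc'
    have h1 : HasDerivAt (fun s => (inner ℝ u (gradient ζ (c s)) : ℝ))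
        (inner ℝ u (fderiv ℝ (gradient ζ) (c s) u)) s :=
      ((innerSL ℝ u).hasFDerivAt.comp_hasDerivAt s hgc)
    have h2 := h1.sub ((hasDerivAt_id s).mul_const (lam * ‖u‖^2)); rw [one_mul] at h2; exact h2
  have hmono : Monotone φ := by
    apply monotone_of_deriv_nonneg
    · exact fun s => (hder s).differentiableAt
    · intro s
      rw [(hder s).deriv, sub_nonneg, real_inner_comm]
      exact quad_lower hζ hlower (c s) u
  have h01 := hmono (zero_le_one)
  have hc0 : c 0 = w := by simp [hc]
  have hc1 : c 1 = z := by simp [hc, hu]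
  rw [hφ] at h01
  simp only [hc0, hc1, zero_mul, sub_zero, one_mul] at h01
  have hsplit : (inner ℝ u (gradient ζ z - gradient ζ w) : ℝ)
      = inner ℝ u (gradient ζ z) - inner ℝ u (gradient ζ w) := inner_sub_right _ _ _
  rw [real_inner_comm]
  show lam * ‖u‖^2 ≤ inner ℝ u (gradient ζ z - gradient ζ w)
  rw [hsplit]
  linarith

end aux5
section aux6
variable {d : ℕ} {ζ : EuclideanSpace ℝ (Fin d) → ℝ} {lam : ℝ}
local notation "E" => EuclideanSpace ℝ (Fin d)

lemma quad_lower' (hlower : ∀ x, (hessE ζ x - lam • (1 : Matrix (Fin d) (Fin d) ℝ)).PosSemidef)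
    (z : E) (u : Fin d → ℝ) : lam * (u ⬝ᵥ u) ≤ u ⬝ᵥ (hessE ζ z *ᵥ u) := by
  have h0 := (hlower z).dotProduct_mulVec_nonneg u
  rw [star_trivial, Matrix.sub_mulVec, dotProduct_sub, Matrix.smul_mulVec,
    Matrix.one_mulVec, dotProduct_smul, smul_eq_mul, sub_nonneg] at h0
  exact h0

lemma A_posdef (hζ : ContDiff ℝ 2 ζ) (hlam : 0 < lam)
    (hlower : ∀ x, (hessE ζ x - lam • (1 : Matrix (Fin d) (Fin d) ℝ)).PosSemidef)
    {t : ℝ} (ht : t ∈ Set.Ioo (0:ℝ) 1) (z : E) :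
    ((1 - t) • (1 : Matrix (Fin d) (Fin d) ℝ) + t • hessE ζ z).PosDef := by
  refine Matrix.PosDef.of_dotProduct_mulVec_pos ?_ ?_
  · ext i j
    simp only [Matrix.conjTranspose_apply, star_trivial, Matrix.add_apply, Matrix.smul_apply,
      smul_eq_mul]
    have h1 : (1 : Matrix (Fin d) (Fin d) ℝ) j i = (1 : Matrix (Fin d) (Fin d) ℝ) i j := by
      rw [Matrix.one_apply, Matrix.one_apply]
      simp only [eq_comm]
    rw [h1, hessE_symm hζ z j i]
  · intro u hu
    rw [star_trivial, Matrix.add_mulVec, dotProduct_add, Matrix.smul_mulVec,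
      Matrix.smul_mulVec, Matrix.one_mulVec, dotProduct_smul,
      dotProduct_smul, smul_eq_mul, smul_eq_mul]
    have h0 : 0 ≤ u ⬝ᵥ u := Finset.sum_nonneg fun i _ => mul_self_nonneg (u i)
    have h1 : 0 < u ⬝ᵥ u := by
      rcases lt_or_eq_of_le h0 with h | h
      · exact h
      · exact absurd (dotProduct_self_eq_zero.1 h.symm) hu
    have h2 := quad_lower' hlower z u
    have ht1 : (0:ℝ) < t := ht.1
    have ht2 : t < 1 := ht.2
    nlinarith [mul_pos ht1 (mul_pos hlam h1), mul_pos (sub_pos.2 ht2) h1]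

end aux6
section aux7
variable {d : ℕ} {ζ : EuclideanSpace ℝ (Fin d) → ℝ} {lam : ℝ}
local notation "E" => EuclideanSpace ℝ (Fin d)

lemma coercive (hζ : ContDiff ℝ 2 ζ) (hlam : 0 < lam)
    (hlower : ∀ x, (hessE ζ x - lam • (1 : Matrix (Fin d) (Fin d) ℝ)).PosSemidef)
    {t₀ : ℝ} (ht₀ : t₀ ∈ Set.Ioo (0:ℝ) 1) (z₀ u : E) :
    min 1 lam * ‖u‖ ≤ ‖(1 - t₀) • u + t₀ • (fderiv ℝ (gradient ζ) z₀ u)‖ := by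
  rcases eq_or_ne u 0 with rfl | hu
  · simp
  · have hnu : 0 < ‖u‖ := norm_pos_iff.2 hu
    have hq : ((1 - t₀) + t₀ * lam) * ‖u‖^2
        ≤ inner ℝ ((1 - t₀) • u + t₀ • (fderiv ℝ (gradient ζ) z₀ u)) u := by
      rw [inner_add_left, real_inner_smul_left, real_inner_smul_left,
        real_inner_self_eq_norm_sq]
      have := quad_lower hζ hlower z₀ u
      have ht1 : (0:ℝ) < t₀ := ht₀.1
      nlinarith
    have hcs := real_inner_le_norm ((1 - t₀) • u + t₀ • (fderiv ℝ (gradient ζ) z₀ u)) u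
    have hmle : min 1 lam ≤ (1 - t₀) + t₀ * lam := by
      have h1 : min 1 lam ≤ 1 := min_le_left _ _
      have h2 : min 1 lam ≤ lam := min_le_right _ _
      have ht1 : (0:ℝ) < t₀ := ht₀.1
      have ht2 : t₀ < 1 := ht₀.2
      nlinarith
    have : min 1 lam * ‖u‖ * ‖u‖
        ≤ ‖(1 - t₀) • u + t₀ • (fderiv ℝ (gradient ζ) z₀ u)‖ * ‖u‖ := by
      nlinarith
    exact le_of_mul_le_mul_right this hnu

lemma L_coords (hζ : ContDiff ℝ 2 ζ) (t₀ : ℝ) (z₀ u : E) (i : Fin d) :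
    ((1 - t₀) • u + t₀ • (fderiv ℝ (gradient ζ) z₀ u)) i
      = (((1 - t₀) • (1 : Matrix (Fin d) (Fin d) ℝ) + t₀ • hessE ζ z₀) *ᵥ u) i := by
  rw [Matrix.add_mulVec, Matrix.smul_mulVec, Matrix.smul_mulVec, Matrix.one_mulVec]
  have h := fderiv_grad_coord hζ z₀ u i
  simp only [WithLp.ofLp_add, WithLp.ofLp_smul, PiLp.add_apply, PiLp.smul_apply, smul_eq_mul, Pi.add_apply, Pi.smul_apply, h]

lemma stepA (hζ : ContDiff ℝ 2 ζ)
    (hlower : ∀ x, (hessE ζ x - lam • (1 : Matrix (Fin d) (Fin d) ℝ)).PosSemidef)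
    {x : E} {y : ℝ → E}
    (hyeq : ∀ t ∈ Set.Ioo (0 : ℝ) 1, (1 - t) • y t + t • gradient ζ (y t) = x)
    {t t₀ : ℝ} (ht : t ∈ Set.Ioo (0:ℝ) 1) (ht₀ : t₀ ∈ Set.Ioo (0:ℝ) 1) :
    min 1 lam * ‖y t - y t₀‖ ≤ |t - t₀| * ‖gradient ζ (y t₀) - y t₀‖ := by
  set g := gradient ζ with hg
  have key : (1 - t) • (y t - y t₀) + t • (g (y t) - g (y t₀))
      = (t₀ - t) • (g (y t₀) - y t₀) := by
    have h1 := hyeq t ht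
    have h2 := hyeq t₀ ht₀
    rw [← h2] at h1
    linear_combination (norm := module) h1
  have hinner := congrArg (fun w : EuclideanSpace ℝ (Fin d) => (inner ℝ w (y t - y t₀) : ℝ)) key
  simp only [inner_add_left, real_inner_smul_left] at hinner
  rw [real_inner_self_eq_norm_sq] at hinner
  have mono := grad_mono hζ hlower (y t) (y t₀)
  rw [← hg] at mono
  have cs1 : |(inner ℝ (g (y t₀) - y t₀) (y t - y t₀) : ℝ)|
      ≤ ‖g (y t₀) - y t₀‖ * ‖y t - y t₀‖ := abs_real_inner_le_norm _ _
  have cs2 : (t₀ - t) * (inner ℝ (g (y t₀) - y t₀) (y t - y t₀) : ℝ)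
      ≤ |t - t₀| * (‖g (y t₀) - y t₀‖ * ‖y t - y t₀‖) := by
    calc (t₀ - t) * (inner ℝ (g (y t₀) - y t₀) (y t - y t₀) : ℝ)
        ≤ |(t₀ - t) * (inner ℝ (g (y t₀) - y t₀) (y t - y t₀) : ℝ)| := le_abs_self _
      _ = |t - t₀| * |(inner ℝ (g (y t₀) - y t₀) (y t - y t₀) : ℝ)| := by
          rw [abs_mul, abs_sub_comm]
      _ ≤ |t - t₀| * (‖g (y t₀) - y t₀‖ * ‖y t - y t₀‖) := by
          exact mul_le_mul_of_nonneg_left cs1 (abs_nonneg _)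
  have hm1 : min 1 lam ≤ 1 := min_le_left _ _
  have hm2 : min 1 lam ≤ lam := min_le_right _ _
  have ht1 : (0:ℝ) < t := ht.1
  have ht2 : t < 1 := ht.2
  have hS : (0:ℝ) ≤ ‖y t - y t₀‖^2 := sq_nonneg _
  have hp1 : 0 ≤ (1 - t) * (1 - min 1 lam) * ‖y t - y t₀‖^2 :=
    mul_nonneg (mul_nonneg (by linarith) (by linarith)) hS
  have hp2 : 0 ≤ t * (lam - min 1 lam) * ‖y t - y t₀‖^2 :=
    mul_nonneg (mul_nonneg (by linarith) (by linarith)) hS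
  have h3 : t * (lam * ‖y t - y t₀‖^2) ≤ t * inner ℝ (g (y t) - g (y t₀)) (y t - y t₀) :=
    mul_le_mul_of_nonneg_left mono ht1.le
  have hsq : min 1 lam * ‖y t - y t₀‖^2 ≤ |t - t₀| * (‖g (y t₀) - y t₀‖ * ‖y t - y t₀‖) := by
    nlinarith
  rcases eq_or_lt_of_le (norm_nonneg (y t - y t₀)) with h0 | h0
  · rw [← h0, mul_zero]
    positivity
  · have := (mul_le_mul_iff_of_pos_right h0).1 (by nlinarith : min 1 lam * ‖y t - y t₀‖ * ‖y t - y t₀‖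
      ≤ (|t - t₀| * ‖g (y t₀) - y t₀‖) * ‖y t - y t₀‖)
    exact this

end aux7
section aux8
variable {d : ℕ} {ζ : EuclideanSpace ℝ (Fin d) → ℝ} {lam : ℝ}
local notation "E" => EuclideanSpace ℝ (Fin d)

set_option maxHeartbeats 2000000 in
lemma stepD (hζ : ContDiff ℝ 2 ζ) (hlam : 0 < lam)
    (hlower : ∀ x, (hessE ζ x - lam • (1 : Matrix (Fin d) (Fin d) ℝ)).PosSemidef)
    {t₀ : ℝ} (ht₀ : t₀ ∈ Set.Ioo (0:ℝ) 1) {x : E} {y : ℝ → E}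
    (hyeq : ∀ t ∈ Set.Ioo (0 : ℝ) 1, (1 - t) • y t + t • gradient ζ (y t) = x)
    (z₀ v : E) (hyz : y t₀ = z₀)
    (hLv : (1 - t₀) • v + t₀ • fderiv ℝ (gradient ζ) z₀ v = z₀ - gradient ζ z₀) :
    HasDerivAt y v t₀ := by
  have hgd : Differentiable ℝ (gradient ζ) := (grad_contDiff hζ).differentiable one_ne_zero
  set B := fderiv ℝ (gradient ζ) z₀ with hBdef
  set m := min 1 lam with hmdef
  have hm0 : 0 < m := lt_min one_pos hlam
  have hm1 : m ≤ 1 := min_le_left _ _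
  set K := ‖gradient ζ z₀ - z₀‖ with hKdef
  have hK0 : (0:ℝ) ≤ K := norm_nonneg _
  set N := ‖B‖ with hNdef
  have hN0 : (0:ℝ) ≤ N := norm_nonneg _
  rw [hasDerivAt_iff_isLittleO, Asymptotics.isLittleO_iff]
  intro ε hε
  set ε₁ := m^2 * ε / (2*(K+1)) with hε₁def
  have hε₁ : 0 < ε₁ := div_pos (mul_pos (pow_pos hm0 2) hε) (by linarith)
  have hlittle : ∀ᶠ z in 𝓝 z₀, ‖gradient ζ z - gradient ζ z₀ - B (z - z₀)‖ ≤ ε₁ * ‖z - z₀‖ := by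
    have h := ((hgd z₀).hasFDerivAt (𝕜 := ℝ)).isLittleO
    rw [Asymptotics.isLittleO_iff] at h
    exact h hε₁
  rw [Metric.eventually_nhds_iff] at hlittle
  obtain ⟨δ, hδ0, hball⟩ := hlittle
  set η₂ := m^2 * ε / (2*((N + ε₁ + 1)*K + 1)) with hη₂def
  have hη₂0 : 0 < η₂ := div_pos (mul_pos (pow_pos hm0 2) hε) (by positivity)
  set η₁ := m * δ / (K + 1) with hη₁def
  have hη₁0 : 0 < η₁ := div_pos (mul_pos hm0 hδ0) (by linarith)
  set η := min η₁ η₂ with hηdef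
  have hη0 : 0 < η := lt_min hη₁0 hη₂0
  have evIoo : ∀ᶠ t in 𝓝 t₀, t ∈ Set.Ioo (0:ℝ) 1 := isOpen_Ioo.eventually_mem ht₀
  have evh : ∀ᶠ t in 𝓝 t₀, dist t t₀ < η :=
    Filter.eventually_of_mem (Metric.ball_mem_nhds t₀ hη0) (fun t ht => ht)
  filter_upwards [evIoo, evh] with t htI htd
  -- basic scalars
  have ht₀0 : (0:ℝ) < t₀ := ht₀.1
  have ht₀1 : t₀ < 1 := ht₀.2
  rw [Real.dist_eq] at htd
  have hhb1 : |t - t₀| < η₁ := lt_of_lt_of_le htd (min_le_left _ _)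
  have hhb2 : |t - t₀| < η₂ := lt_of_lt_of_le htd (min_le_right _ _)
  have habs0 : (0:ℝ) ≤ |t - t₀| := abs_nonneg _
  -- Lipschitz bound
  have hlip : m * ‖y t - z₀‖ ≤ |t - t₀| * K := by
    have := stepA hζ hlower hyeq htI ht₀
    rwa [hyz] at this
  -- Δ is small
  have hΔδ : ‖y t - z₀‖ < δ := by
    have hq : η₁ * (K + 1) = m * δ := by rw [hη₁def]; field_simp
    have h1 : |t - t₀| * K ≤ η₁ * K := mul_le_mul_of_nonneg_right hhb1.le hK0
    have h2 : η₁ * K < m * δ := by nlinarith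
    have h3 : m * ‖y t - z₀‖ < m * δ := by linarith
    exact lt_of_mul_lt_mul_left h3 hm0.le
  -- remainder bound
  set r := gradient ζ (y t) - gradient ζ z₀ - B (y t - z₀) with hrdef
  have hrb : ‖r‖ ≤ ε₁ * ‖y t - z₀‖ := by
    have := hball (show dist (y t) z₀ < δ by rwa [dist_eq_norm])
    exact this
  -- key identities
  have key : (1 - t) • (y t - z₀) + t • (gradient ζ (y t) - gradient ζ z₀)
      = (t₀ - t) • (gradient ζ z₀ - z₀) := by
    have h1 := hyeq t htI
    have h2 := hyeq t₀ ht₀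
    rw [hyz] at h2
    rw [← h2] at h1
    linear_combination (norm := module) h1
  have hGr : gradient ζ (y t) - gradient ζ z₀ = B (y t - z₀) + r := by
    rw [hrdef]; abel
  have hgz : gradient ζ z₀ - z₀ = -((1 - t₀) • v + t₀ • B v) := by
    rw [hLv, neg_sub]
  rw [hGr, hgz] at key
  have idII : (1 - t₀) • (y t - z₀ - (t - t₀) • v) + t₀ • (B (y t - z₀) - (t - t₀) • B v)
      = -(t₀ • r) - (t - t₀) • (B (y t - z₀) + r - (y t - z₀)) := by
    linear_combination (norm := module) key
  have hBw : B (y t - z₀ - (t - t₀) • v) = B (y t - z₀) - (t - t₀) • B v := by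
    rw [map_sub, _root_.map_smul]
  have hco := coercive hζ hlam hlower ht₀ z₀ (y t - z₀ - (t - t₀) • v)
  rw [← hBdef, hBw, idII] at hco
  -- norm bound on RHS
  have hBΔ : ‖B (y t - z₀)‖ ≤ N * ‖y t - z₀‖ := B.le_opNorm _
  have hnb : ‖-(t₀ • r) - (t - t₀) • (B (y t - z₀) + r - (y t - z₀))‖
      ≤ t₀ * ‖r‖ + |t - t₀| * (N * ‖y t - z₀‖ + ‖r‖ + ‖y t - z₀‖) := by
    calc ‖-(t₀ • r) - (t - t₀) • (B (y t - z₀) + r - (y t - z₀))‖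
        ≤ ‖-(t₀ • r)‖ + ‖(t - t₀) • (B (y t - z₀) + r - (y t - z₀))‖ := norm_sub_le _ _
      _ = t₀ * ‖r‖ + |t - t₀| * ‖B (y t - z₀) + r - (y t - z₀)‖ := by
          rw [norm_neg, norm_smul, norm_smul, Real.norm_eq_abs, Real.norm_eq_abs,
            abs_of_pos ht₀0]
      _ ≤ t₀ * ‖r‖ + |t - t₀| * (N * ‖y t - z₀‖ + ‖r‖ + ‖y t - z₀‖) := by
          have h1 : ‖B (y t - z₀) + r - (y t - z₀)‖
              ≤ N * ‖y t - z₀‖ + ‖r‖ + ‖y t - z₀‖ := by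
            calc ‖B (y t - z₀) + r - (y t - z₀)‖
                ≤ ‖B (y t - z₀) + r‖ + ‖y t - z₀‖ := norm_sub_le _ _
              _ ≤ ‖B (y t - z₀)‖ + ‖r‖ + ‖y t - z₀‖ := by
                  have := norm_add_le (B (y t - z₀)) r
                  linarith
              _ ≤ N * ‖y t - z₀‖ + ‖r‖ + ‖y t - z₀‖ := by linarith
          exact add_le_add le_rfl (mul_le_mul_of_nonneg_left h1 habs0)
  have hco2 : m * ‖y t - z₀ - (t - t₀) • v‖
      ≤ t₀ * ‖r‖ + |t - t₀| * (N * ‖y t - z₀‖ + ‖r‖ + ‖y t - z₀‖) := le_trans hco hnb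
  -- final numeric estimate
  have hΔ0 : (0:ℝ) ≤ ‖y t - z₀‖ := norm_nonneg _
  have hr0 : (0:ℝ) ≤ ‖r‖ := norm_nonneg _
  have hw0 : (0:ℝ) ≤ ‖y t - z₀ - (t - t₀) • v‖ := norm_nonneg _
  have e1 : ε₁ * (2*(K+1)) = m^2 * ε := by rw [hε₁def]; field_simp
  have e2 : η₂ * (2*((N + ε₁ + 1)*K + 1)) = m^2 * ε := by rw [hη₂def]; field_simp
  have hmr : m * ‖r‖ ≤ ε₁ * (m * ‖y t - z₀‖) := by
    have := mul_le_mul_of_nonneg_left hrb hm0.le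
    linarith [this]
  have s1 : m * (t₀ * ‖r‖) ≤ ε₁ * (m * ‖y t - z₀‖) := by
    have h1 : (0:ℝ) ≤ m * ((1 - t₀) * ‖r‖) :=
      mul_nonneg hm0.le (mul_nonneg (by linarith) hr0)
    nlinarith [hmr]
  have s2 : m * (|t - t₀| * (N * ‖y t - z₀‖ + ‖r‖ + ‖y t - z₀‖))
      ≤ |t - t₀| * ((N + ε₁ + 1) * (m * ‖y t - z₀‖)) := by
    have inner1 : m * (N * ‖y t - z₀‖ + ‖r‖ + ‖y t - z₀‖)
        ≤ (N + ε₁ + 1) * (m * ‖y t - z₀‖) := by nlinarith [hmr]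
    calc m * (|t - t₀| * (N * ‖y t - z₀‖ + ‖r‖ + ‖y t - z₀‖))
        = |t - t₀| * (m * (N * ‖y t - z₀‖ + ‖r‖ + ‖y t - z₀‖)) := by ring
      _ ≤ |t - t₀| * ((N + ε₁ + 1) * (m * ‖y t - z₀‖)) :=
          mul_le_mul_of_nonneg_left inner1 habs0
  have s3 : m^2 * ‖y t - z₀ - (t - t₀) • v‖
      ≤ ε₁ * (|t - t₀| * K) + |t - t₀| * ((N + ε₁ + 1) * (|t - t₀| * K)) := by
    have h1 := mul_le_mul_of_nonneg_left hco2 hm0.le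
    have h2 : ε₁ * (m * ‖y t - z₀‖) ≤ ε₁ * (|t - t₀| * K) :=
      mul_le_mul_of_nonneg_left hlip hε₁.le
    have h3 : |t - t₀| * ((N + ε₁ + 1) * (m * ‖y t - z₀‖))
        ≤ |t - t₀| * ((N + ε₁ + 1) * (|t - t₀| * K)) :=
      mul_le_mul_of_nonneg_left (mul_le_mul_of_nonneg_left hlip (by positivity)) habs0
    nlinarith [s1, s2]
  have hP0 : (0:ℝ) ≤ (N + ε₁ + 1) * K := by positivity
  have s4 : ε₁ * K ≤ m^2 * ε / 2 := by nlinarith [e1, hε₁]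
  have s5 : |t - t₀| * ((N + ε₁ + 1) * K) ≤ m^2 * ε / 2 := by
    have h1 : |t - t₀| * ((N + ε₁ + 1) * K) ≤ η₂ * ((N + ε₁ + 1) * K) :=
      mul_le_mul_of_nonneg_right hhb2.le hP0
    nlinarith [e2, hη₂0]
  have s6 : m^2 * ‖y t - z₀ - (t - t₀) • v‖ ≤ m^2 * (ε * |t - t₀|) := by
    have h1 : ε₁ * (|t - t₀| * K) = (ε₁ * K) * |t - t₀| := by ring
    have h2 : ε₁ * (|t - t₀| * K) ≤ (m^2 * ε / 2) * |t - t₀| := by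
      rw [h1]; exact mul_le_mul_of_nonneg_right s4 habs0
    have h3 : |t - t₀| * ((N + ε₁ + 1) * (|t - t₀| * K))
        = (|t - t₀| * ((N + ε₁ + 1) * K)) * |t - t₀| := by ring
    have h4 : |t - t₀| * ((N + ε₁ + 1) * (|t - t₀| * K)) ≤ (m^2 * ε / 2) * |t - t₀| := by
      rw [h3]; exact mul_le_mul_of_nonneg_right s5 habs0
    calc m^2 * ‖y t - z₀ - (t - t₀) • v‖
        ≤ ε₁ * (|t - t₀| * K) + |t - t₀| * ((N + ε₁ + 1) * (|t - t₀| * K)) := s3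
      _ ≤ (m^2 * ε / 2) * |t - t₀| + (m^2 * ε / 2) * |t - t₀| := add_le_add h2 h4
      _ = m^2 * (ε * |t - t₀|) := by ring
  have s7 : ‖y t - z₀ - (t - t₀) • v‖ ≤ ε * |t - t₀| :=
    le_of_mul_le_mul_left s6 (by positivity : (0:ℝ) < m^2)
  rw [hyz, Real.norm_eq_abs]
  exact s7

end aux8

/-- Let `ζ` be `C²` with `λ·I ≤ D²ζ ≤ Λ·I` everywhere.  If
`y : (0,1) → ℝ^d` is continuous and satisfies `(1-t)·y(t) + t·∇ζ(y(t)) = x` for all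
`t ∈ (0,1)`, then `y` is differentiable on `(0,1)` with
`y'(t) = -((1-t)·I + t·D²ζ(y(t)))⁻¹ (∇ζ(y(t)) - y(t))`. -/
theorem stmt14 {d : ℕ} (lam Λ : ℝ) (hlam : 0 < lam) (hlamΛ : lam ≤ Λ)
    (ζ : EuclideanSpace ℝ (Fin d) → ℝ) (hζ : ContDiff ℝ 2 ζ)
    (hlower : ∀ x, (hessE ζ x - lam • (1 : Matrix (Fin d) (Fin d) ℝ)).PosSemidef)
    (hupper : ∀ x, (Λ • (1 : Matrix (Fin d) (Fin d) ℝ) - hessE ζ x).PosSemidef)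
    (x : EuclideanSpace ℝ (Fin d)) (y : ℝ → EuclideanSpace ℝ (Fin d))
    (hycont : ContinuousOn y (Set.Ioo (0 : ℝ) 1))
    (hyeq : ∀ t ∈ Set.Ioo (0 : ℝ) 1, (1 - t) • y t + t • gradient ζ (y t) = x) :
    ∀ t ∈ Set.Ioo (0 : ℝ) 1,
      HasDerivAt y
        (-(EuclideanSpace.equiv (Fin d) ℝ).symm
            ((((1 - t) • (1 : Matrix (Fin d) (Fin d) ℝ) + t • hessE ζ (y t))⁻¹) *ᵥ
              (EuclideanSpace.equiv (Fin d) ℝ) (gradient ζ (y t) - y t))) t := by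
  intro t₀ ht₀
  set z₀ := y t₀ with hz₀
  set A := (1 - t₀) • (1 : Matrix (Fin d) (Fin d) ℝ) + t₀ • hessE ζ z₀ with hA
  set B := fderiv ℝ (gradient ζ) z₀ with hBdef
  set v : EuclideanSpace ℝ (Fin d) :=
    -(EuclideanSpace.equiv (Fin d) ℝ).symm (A⁻¹ *ᵥ (EuclideanSpace.equiv (Fin d) ℝ) (gradient ζ z₀ - z₀)) with hv
  have hAposdef := A_posdef hζ hlam hlower ht₀ z₀
  rw [← hA] at hAposdef
  have hAinv : A * A⁻¹ = 1 :=
    Matrix.mul_nonsing_inv A ((Matrix.isUnit_iff_isUnit_det A).1 hAposdef.isUnit)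
  set c : Fin d → ℝ := (EuclideanSpace.equiv (Fin d) ℝ) (gradient ζ z₀ - z₀) with hc
  have hnegv : (-v) = (EuclideanSpace.equiv (Fin d) ℝ).symm (A⁻¹ *ᵥ c) := by rw [hv, neg_neg]
  have hcoords : ∀ i, ((1 - t₀) • (-v) + t₀ • B (-v)) i = (gradient ζ z₀ - z₀) i := by
    intro i
    rw [hBdef, L_coords hζ t₀ z₀ (-v) i, ← hA, hnegv]
    show (A *ᵥ (A⁻¹ *ᵥ c)) i = (gradient ζ z₀ - z₀) i
    rw [Matrix.mulVec_mulVec, hAinv, Matrix.one_mulVec]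
    rfl
  have hfun : ((1 - t₀) • (-v) + t₀ • B (-v)) = gradient ζ z₀ - z₀ := PiLp.ext hcoords
  rw [map_neg] at hfun
  have hLv : (1 - t₀) • v + t₀ • B v = z₀ - gradient ζ z₀ := by
    linear_combination (norm := module) -hfun
  exact stepD hζ hlam hlower ht₀ hyeq z₀ v hz₀.symm hLv
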